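/- Let α ≥ 0, γ ≥ 1 be real, β ∈ ℂ with β ≠ 0 and γ+α ≥ 3|β|, and let m ≥ 0. Then for all z in the open unit disc, Re((𝓡_{α,β,γ})'_m(z) / 𝓡'_{α,β,γ}(z)) ≥ (γ+α−|β|)/(γ+α+|β|). -/

import Mathlib

set_option maxHeartbeats 1000000


open Complex

noncomputable def rabA (α γ : ℝ) (β : ℂ) (n : ℕ) : ℂ :=
  β ^ n * (Real.Gamma (γ + α) : ℂ) / (Real.Gamma ((γ + α) * (n + 1)) : ℂ)

noncomputable def rab (α γ : ℝ) (β : ℂ) (z : ℂ) : ℂ :=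
  z + ∑' k : ℕ, rabA α γ β (k + 1) * z ^ (k + 2)

noncomputable def rabPartial (α γ : ℝ) (β : ℂ) (m : ℕ) (z : ℂ) : ℂ :=
  z + ∑ k ∈ Finset.range m, rabA α γ β (k + 1) * z ^ (k + 2)

noncomputable def rabD (α γ : ℝ) (β : ℂ) (z : ℂ) : ℂ :=
  1 + ∑' k : ℕ, ((k : ℂ) + 2) * rabA α γ β (k + 1) * z ^ (k + 1)

noncomputable def rabDPartial (α γ : ℝ) (β : ℂ) (m : ℕ) (z : ℂ) : ℂ :=
  1 + ∑ k ∈ Finset.range m, ((k : ℂ) + 2) * rabA α γ β (k + 1) * z ^ (k + 1)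

noncomputable def rabAlex (α γ : ℝ) (β : ℂ) (z : ℂ) : ℂ :=
  z + ∑' k : ℕ, rabA α γ β (k + 1) / ((k : ℂ) + 2) * z ^ (k + 2)

noncomputable def rabAlexPartial (α γ : ℝ) (β : ℂ) (m : ℕ) (z : ℂ) : ℂ :=
  z + ∑ k ∈ Finset.range m, rabA α γ β (k + 1) / ((k : ℂ) + 2) * z ^ (k + 2)

/-- Gamma is monotone on `[2, ∞)`. -/
lemma rab_gammaMono {x y : ℝ} (hx : 2 ≤ x) (hxy : x ≤ y) : Real.Gamma x ≤ Real.Gamma y :=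
  Real.Gamma_strictMonoOn_Ici.monotoneOn (Set.mem_Ici.mpr hx)
    (Set.mem_Ici.mpr (hx.trans hxy)) hxy

/-- Lower bound `Γ(2c) (2c)^k ≤ Γ(c(k+2))` for `c ≥ 1`. -/
lemma rab_gammaLB (c : ℝ) (hc : 1 ≤ c) (k : ℕ) :
    Real.Gamma (2*c) * (2*c)^k ≤ Real.Gamma (c*(k+2)) := by
  have hk : (0:ℝ) ≤ k := Nat.cast_nonneg k
  have step : ∀ j : ℕ, Real.Gamma (2*c) * (2*c)^j ≤ Real.Gamma (2*c + j) := by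
    intro j
    induction j with
    | zero => simp
    | succ n ih =>
      have hn : (0:ℝ) ≤ n := Nat.cast_nonneg n
      have hne : 2*c + (n:ℝ) ≠ 0 := by nlinarith
      have hGpos : 0 < Real.Gamma (2*c + n) := Real.Gamma_pos_of_pos (by nlinarith)
      have hrec : Real.Gamma (2*c + ((n:ℝ)+1)) = (2*c+n) * Real.Gamma (2*c+n) := by
        rw [show (2*c + ((n:ℝ)+1)) = (2*c + n) + 1 by ring, Real.Gamma_add_one hne]
      calc Real.Gamma (2*c) * (2*c)^(n+1) = (2*c) * (Real.Gamma (2*c) * (2*c)^n) := by ring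
        _ ≤ (2*c) * Real.Gamma (2*c + n) := by
            apply mul_le_mul_of_nonneg_left ih (by linarith)
        _ ≤ (2*c + n) * Real.Gamma (2*c + n) := by nlinarith
        _ = Real.Gamma (2*c + ((n:ℕ)+1:ℕ)) := by
            rw [show ((((n:ℕ)+1:ℕ)):ℝ) = (n:ℝ)+1 by push_cast; ring, hrec]
  calc Real.Gamma (2*c) * (2*c)^k ≤ Real.Gamma (2*c + k) := step k
    _ ≤ Real.Gamma (c*(k+2)) := rab_gammaMono (by linarith) (by nlinarith)

lemma rab_hasSumK2 {w : ℝ} (h0 : 0 ≤ w) (h1 : w < 1) :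
    HasSum (fun k : ℕ => ((k:ℝ)+2)*w^k) ((2-w)/(1-w)^2) := by
  have hw : ‖w‖ < 1 := by rwa [Real.norm_eq_abs, _root_.abs_of_nonneg h0]
  have A := hasSum_coe_mul_geometric_of_norm_lt_one hw
  have B := (hasSum_geometric_of_lt_one h0 h1).mul_left 2
  have C := A.add B
  have hne : (1:ℝ) - w ≠ 0 := by linarith
  have hval : (2-w)/(1-w)^2 = w / (1 - w) ^ 2 + 2 * (1 - w)⁻¹ := by
    field_simp
    ring
  rw [hval]
  have hf : (fun k : ℕ => ((k:ℝ)+2)*w^k) = (fun b : ℕ => (b:ℝ) * w ^ b + 2 * w ^ b) := by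
    funext k; ring
  rw [hf]; exact C

lemma rab_abs_rabA_le (α γ : ℝ) (β : ℂ) (hc : 1 ≤ γ + α) (k : ℕ) :
    ‖rabA α γ β (k+1)‖ ≤
      (‖β‖ * Real.Gamma (γ+α) / Real.Gamma (2*(γ+α)))
        * (‖β‖/(2*(γ+α)))^k := by
  set c := γ + α
  set b := ‖β‖
  have hc0 : 0 < c := by linarith
  have hb0 : 0 ≤ b := norm_nonneg β
  have hG1 : 0 < Real.Gamma c := Real.Gamma_pos_of_pos hc0
  have hG2 : 0 < Real.Gamma (2*c) := Real.Gamma_pos_of_pos (by linarith)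
  have hG3 : 0 < Real.Gamma (c*((k:ℝ)+2)) := Real.Gamma_pos_of_pos (by positivity)
  have harg : c * ((k+1:ℕ) + 1 : ℝ) = c * ((k:ℝ)+2) := by push_cast; ring
  have habs : ‖rabA α γ β (k+1)‖
      = b^(k+1) * Real.Gamma c / Real.Gamma (c*((k:ℝ)+2)) := by
    rw [rabA, norm_div, norm_mul, norm_pow, Complex.norm_real, Complex.norm_real, harg,
      Real.norm_eq_abs, Real.norm_eq_abs,
      _root_.abs_of_pos hG1, _root_.abs_of_pos hG3]
  rw [habs]
  have h2 : (b * Real.Gamma c / Real.Gamma (2*c)) * (b/(2*c))^k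
      = b^(k+1) * Real.Gamma c / (Real.Gamma (2*c) * (2*c)^k) := by
    rw [div_pow]
    field_simp
    ring
  rw [h2]
  apply div_le_div_of_nonneg_left (by positivity)
    (mul_pos hG2 (pow_pos (by linarith) k))
  exact rab_gammaLB c hc k

theorem rabD_partial_re2 (α γ : ℝ) (β : ℂ) (hα : 0 ≤ α) (hγ : 1 ≤ γ)
    (hβ0 : β ≠ 0) (hβ : 3 * ‖β‖ ≤ γ + α) (m : ℕ) (z : ℂ)
    (hz : ‖z‖ < 1) :
    (γ + α - ‖β‖) / (γ + α + ‖β‖) ≤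
      (rabDPartial α γ β m z / rabD α γ β z).re := by
  set c : ℝ := γ + α with hcdef
  set b : ℝ := ‖β‖ with hbdef
  have hb0 : 0 < b := norm_pos_iff.mpr hβ0
  have hc1 : 1 ≤ c := by linarith
  have hc0 : 0 < c := by linarith
  have hbc : 3 * b ≤ c := hβ
  set σ : ℝ := (c + b) / (2 * b) with hσdef
  have hσ2 : 2 ≤ σ := by
    rw [hσdef, le_div_iff₀ (by linarith)]; linarith
  have hσ0 : 0 < σ := by linarith
  set M : ℝ := b * Real.Gamma c / Real.Gamma (2*c) with hMdef
  set w : ℝ := b / (2*c) with hwdef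
  have hG1 : 0 < Real.Gamma c := Real.Gamma_pos_of_pos hc0
  have hG2 : 0 < Real.Gamma (2*c) := Real.Gamma_pos_of_pos (by linarith)
  have hM0 : 0 < M := by positivity
  have hw0 : 0 ≤ w := by positivity
  have hw1 : w < 1 := by
    rw [hwdef, div_lt_one (by linarith)]; linarith
  have h1w : 0 < 1 - w := by linarith
  set f : ℕ → ℂ := fun k => ((k : ℂ) + 2) * rabA α γ β (k + 1) * z ^ (k + 1) with hfdef
  set g : ℕ → ℝ := fun k => ((k:ℝ) + 2) * ‖rabA α γ β (k + 1)‖ with hgdef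
  have hg0 : ∀ k, 0 ≤ g k := fun k => by
    have := norm_nonneg (rabA α γ β (k+1)); positivity
  have hgle : ∀ k, g k ≤ M * (((k:ℝ)+2) * w^k) := by
    intro k
    have h := rab_abs_rabA_le α γ β hc1 k
    have hk2 : (0:ℝ) ≤ (k:ℝ)+2 := by positivity
    calc g k = ((k:ℝ)+2) * ‖rabA α γ β (k + 1)‖ := rfl
      _ ≤ ((k:ℝ)+2) * (M * w^k) := mul_le_mul_of_nonneg_left h hk2
      _ = M * (((k:ℝ)+2) * w^k) := by ring
  have hSw : HasSum (fun k : ℕ => M * (((k:ℝ)+2)*w^k)) (M * ((2-w)/(1-w)^2)) :=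
    (rab_hasSumK2 hw0 hw1).mul_left M
  have hgsum : Summable g := Summable.of_nonneg_of_le hg0 hgle hSw.summable
  have hgtsum : ∑' k, g k ≤ M * ((2-w)/(1-w)^2) := by
    calc ∑' k, g k ≤ ∑' k : ℕ, M * (((k:ℝ)+2)*w^k) := Summable.tsum_le_tsum hgle hgsum hSw.summable
      _ = M * ((2-w)/(1-w)^2) := hSw.tsum_eq
  have hg0t : 0 ≤ ∑' k, g k := tsum_nonneg hg0
  -- the key scalar inequality
  have hσ1 : σ - 1 = (c - b) / (2*b) := by
    rw [hσdef]; field_simp; ring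
  have hcb : c * Real.Gamma c ≤ Real.Gamma (2*c) := by
    have h1 : Real.Gamma (c + 1) = c * Real.Gamma c := Real.Gamma_add_one hc0.ne'
    rw [← h1]
    exact rab_gammaMono (by linarith) (by linarith)
  have h1 : (c-b)*(2-w) ≤ 2*c*(1-w)^2 := by
    have hwc : w * (2*c) = b := by rw [hwdef]; field_simp
    nlinarith [hwc, mul_pos hb0 hc0, sq_nonneg w, hb0, hc0]
  have hE : (σ-1) * (M*((2-w)/(1-w)^2)) ≤ 1 := by
    rw [hσ1, hMdef]
    have heq : (c - b) / (2*b) * (b * Real.Gamma c / Real.Gamma (2*c) * ((2-w)/(1-w)^2))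
        = ((c-b) * Real.Gamma c * (2-w)) / (2 * Real.Gamma (2*c) * (1-w)^2) := by
      field_simp
    rw [heq, div_le_one (by positivity)]
    nlinarith [mul_le_mul_of_nonneg_right h1 hG1.le,
      mul_le_mul_of_nonneg_left hcb (by positivity : (0:ℝ) ≤ 2*(1-w)^2)]
  have hkey : (σ - 1) * ∑' k, g k ≤ 1 :=
    le_trans (mul_le_mul_of_nonneg_left hgtsum (by linarith)) hE
  have hg1 : ∑' k, g k ≤ 1 := by nlinarith
  -- norms of f
  have hnormf : ∀ k, ‖f k‖ = g k * ‖z‖ ^ (k+1) := by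
    intro k
    have hcast : ((k:ℂ)+2) = (((k:ℝ)+2 : ℝ) : ℂ) := by push_cast; ring
    rw [hfdef]
    simp only [norm_mul, norm_pow, hcast, Complex.norm_real, Real.norm_eq_abs]
    rw [_root_.abs_of_nonneg (by positivity : (0:ℝ) ≤ (k:ℝ)+2)]
  have hfnorm_le : ∀ k, ‖f k‖ ≤ g k * ‖z‖ := by
    intro k
    rw [hnormf k]
    apply mul_le_mul_of_nonneg_left _ (hg0 k)
    calc ‖z‖ ^ (k+1) ≤ ‖z‖ ^ 1 :=
          pow_le_pow_of_le_one (norm_nonneg z) hz.le (by omega)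
      _ = ‖z‖ := pow_one _
  have hfnormsum : Summable fun k => ‖f k‖ :=
    Summable.of_nonneg_of_le (fun k => norm_nonneg _) hfnorm_le (hgsum.mul_right _)
  have hfsum : Summable f := Summable.of_norm hfnormsum
  have hN1 : ∑' k, ‖f k‖ ≤ ‖z‖ := by
    calc ∑' k, ‖f k‖ ≤ ∑' k, g k * ‖z‖ :=
          Summable.tsum_le_tsum hfnorm_le hfnormsum (hgsum.mul_right _)
      _ = (∑' k, g k) * ‖z‖ := tsum_mul_right
      _ ≤ 1 * ‖z‖ := by
          apply mul_le_mul_of_nonneg_right hg1 (norm_nonneg z)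
      _ = ‖z‖ := one_mul _
  -- D and its partial pieces
  have hDeq : rabD α γ β z = 1 + ∑' k, f k := rfl
  have hPeq : rabDPartial α γ β m z = 1 + ∑ k ∈ Finset.range m, f k := rfl
  have htsumnorm : ‖∑' k, f k‖ ≤ ∑' k, ‖f k‖ := norm_tsum_le_tsum_norm hfnormsum
  have hDlow : 1 - ‖z‖ ≤ ‖rabD α γ β z‖ := by
    rw [hDeq]
    have htri : ‖(1:ℂ)‖ ≤ ‖1 + ∑' k, f k‖ + ‖∑' k, f k‖ := by
      calc ‖(1:ℂ)‖ = ‖(1 + ∑' k, f k) - ∑' k, f k‖ := by rw [add_sub_cancel_right]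
        _ ≤ ‖1 + ∑' k, f k‖ + ‖∑' k, f k‖ := norm_sub_le _ _
    rw [norm_one] at htri
    linarith
  have hDpos : 0 < ‖rabD α γ β z‖ := by linarith
  have hD0 : rabD α γ β z ≠ 0 := by
    intro h
    rw [h, norm_zero] at hDpos
    exact lt_irrefl _ hDpos
  -- tail
  have htail : Summable fun k => f (k + m) := (summable_nat_add_iff m).mpr hfsum
  have htailnorm : Summable fun k => ‖f (k + m)‖ := (summable_nat_add_iff m).mpr hfnormsum
  have hsplit : (∑ k ∈ Finset.range m, f k) + ∑' k, f (k + m) = ∑' k, f k :=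
    Summable.sum_add_tsum_nat_add m hfsum
  have hsplitnorm : (∑ k ∈ Finset.range m, ‖f k‖) + ∑' k, ‖f (k + m)‖ = ∑' k, ‖f k‖ :=
    Summable.sum_add_tsum_nat_add m hfnormsum
  set H : ℂ := ∑ k ∈ Finset.range m, f k with hHdef
  set TT : ℂ := ∑' k, f (k + m) with hTTdef
  set Hb : ℝ := ∑ k ∈ Finset.range m, ‖f k‖ with hHbdef
  set Tb : ℝ := ∑' k, ‖f (k + m)‖ with hTbdef
  have hHb : ‖H‖ ≤ Hb := norm_sum_le _ _
  have hTb : ‖TT‖ ≤ Tb := norm_tsum_le_tsum_norm htailnorm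
  have hHb0 : 0 ≤ Hb := Finset.sum_nonneg fun k _ => norm_nonneg _
  have hTb0 : 0 ≤ Tb := tsum_nonneg fun k => norm_nonneg _
  have hHT : Hb + Tb ≤ 1 := by
    rw [hsplitnorm.symm] at hN1
    linarith
  have hcond : Hb + (σ-1)*Tb ≤ 1 := by
    have e0 : Hb + Tb ≤ ∑' k, g k := by
      have := hsplitnorm
      have h2 : ∑' k, ‖f k‖ ≤ (∑' k, g k) * ‖z‖ := by
        calc ∑' k, ‖f k‖ ≤ ∑' k, g k * ‖z‖ :=
              Summable.tsum_le_tsum hfnorm_le hfnormsum (hgsum.mul_right _)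
          _ = (∑' k, g k) * ‖z‖ := tsum_mul_right
      have h3 : (∑' k, g k) * ‖z‖ ≤ ∑' k, g k :=
        mul_le_of_le_one_right hg0t hz.le
      linarith
    calc Hb + (σ-1)*Tb ≤ (σ-1)*Hb + (σ-1)*Tb := by nlinarith
      _ = (σ-1)*(Hb+Tb) := by ring
      _ ≤ (σ-1)*(∑' k, g k) := mul_le_mul_of_nonneg_left e0 (by linarith)
      _ ≤ 1 := hkey
  -- decomposition D = P + T
  have hPD : rabD α γ β z = rabDPartial α γ β m z + TT := by
    rw [hDeq, hPeq, ← hsplit]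
    ring
  have hTT : TT = rabD α γ β z - rabDPartial α γ β m z := by
    rw [hPD]; ring
  -- main norm inequality
  have hmain : ‖(σ:ℂ) * TT‖ ≤ ‖2 * rabD α γ β z - (σ:ℂ)*TT‖ := by
    have hx : 2 * rabD α γ β z - (σ:ℂ)*TT
        = 2 + (2*H + ((2:ℂ)-(σ:ℂ))*TT) := by
      rw [hDeq, ← hsplit]
      ring
    have hnx : ‖2*H + ((2:ℂ)-(σ:ℂ))*TT‖ ≤ 2*Hb + (σ-2)*Tb := by
      calc ‖2*H + ((2:ℂ)-(σ:ℂ))*TT‖ ≤ ‖2*H‖ + ‖((2:ℂ)-(σ:ℂ))*TT‖ := norm_add_le _ _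
        _ = ‖(2:ℂ)‖*‖H‖ + ‖((2:ℂ)-(σ:ℂ))‖*‖TT‖ := by rw [norm_mul, norm_mul]
        _ = 2*‖H‖ + (σ-2)*‖TT‖ := by
            have h2 : ‖(2:ℂ)‖ = 2 := by simp
            have hs : ‖((2:ℂ)-(σ:ℂ))‖ = σ - 2 := by
              rw [show ((2:ℂ)-(σ:ℂ)) = (((2 - σ : ℝ)):ℂ) by push_cast; ring]
              rw [Complex.norm_real, Real.norm_eq_abs, abs_of_nonpos (by linarith)]
              ring
            rw [h2, hs]
        _ ≤ 2*Hb + (σ-2)*Tb := by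
            have := mul_le_mul_of_nonneg_left hHb (by norm_num : (0:ℝ) ≤ 2)
            have := mul_le_mul_of_nonneg_left hTb (by linarith : (0:ℝ) ≤ σ - 2)
            linarith
    have hLHS : ‖(σ:ℂ) * TT‖ = σ * ‖TT‖ := by
      rw [norm_mul, Complex.norm_real, Real.norm_eq_abs, _root_.abs_of_pos hσ0]
    have htri : 2 - ‖2*H + ((2:ℂ)-(σ:ℂ))*TT‖ ≤ ‖2 + (2*H + ((2:ℂ)-(σ:ℂ))*TT)‖ := by
      have h := norm_sub_le (2 + (2*H + ((2:ℂ)-(σ:ℂ))*TT)) (2*H + ((2:ℂ)-(σ:ℂ))*TT)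
      have h2 : (2 + (2*H + ((2:ℂ)-(σ:ℂ))*TT)) - (2*H + ((2:ℂ)-(σ:ℂ))*TT) = (2:ℂ) := by ring
      rw [h2] at h
      have h3 : ‖(2:ℂ)‖ = 2 := by simp
      rw [h3] at h
      linarith
    rw [hx, hLHS]
    have hσT : σ * ‖TT‖ ≤ σ * Tb := mul_le_mul_of_nonneg_left hTb hσ0.le
    have : σ * Tb ≤ 2 - (2*Hb + (σ-2)*Tb) := by nlinarith
    linarith
  -- the w-transform
  set Q : ℂ := rabDPartial α γ β m z / rabD α γ β z with hQdef
  set W : ℂ := (σ:ℂ) * Q - (σ:ℂ) + 1 with hWdef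
  have e1 : W - 1 = -((σ:ℂ)*TT) / rabD α γ β z := by
    rw [hWdef, hQdef, hTT]
    field_simp
    ring
  have e2 : W + 1 = (2 * rabD α γ β z - (σ:ℂ)*TT) / rabD α γ β z := by
    rw [hWdef, hQdef, hTT]
    field_simp
    ring
  have hW : ‖W - 1‖ ≤ ‖W + 1‖ := by
    rw [e1, e2, norm_div, norm_div, norm_neg]
    exact div_le_div_of_nonneg_right hmain hDpos.le
  have hre : 0 ≤ W.re := by
    have hsq : ‖W - 1‖^2 ≤ ‖W + 1‖^2 := by
      apply pow_le_pow_left₀ (norm_nonneg _) hW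
    have e : ‖W+1‖^2 - ‖W-1‖^2 = 4 * W.re := by
      rw [Complex.sq_norm, Complex.sq_norm,
        Complex.normSq_apply, Complex.normSq_apply]
      simp [Complex.add_re, Complex.add_im, Complex.sub_re, Complex.sub_im]
      ring
    linarith
  have hWre : W.re = σ * Q.re - σ + 1 := by
    rw [hWdef]
    simp [Complex.add_re, Complex.sub_re, Complex.one_re, Complex.ofReal_re,
      Complex.mul_re, Complex.ofReal_im]
  have hfrac : (c-b)/(c+b) = (σ-1)/σ := by
    rw [div_eq_div_iff (show (c+b) ≠ 0 by positivity) hσ0.ne', hσ1, hσdef]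
    field_simp
  have hQre : (σ-1)/σ ≤ Q.re := by
    rw [div_le_iff₀ hσ0]
    nlinarith [hre, hWre]
  calc (c-b)/(c+b) = (σ-1)/σ := hfrac
    _ ≤ Q.re := hQre
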